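/- Suppose a finite weighted digraph (G,m) has a unique source F (respectively unique sink S) and let φ ∈ ker(L^+) (respectively ker(L^-)). Then φ is constant on F (resp. S) and the maximum of |φ| over V is attained on F (resp. S). -/

import Mathlib

open Finset

variable {V A : Type*}

/-- Reachability by a directed path (`u ⇝ v`). -/
def Reaches (tail head : A → V) : V → V → Prop :=
  Relation.ReflTransGen (fun u v => ∃ a, tail a = u ∧ head a = v)

/-- A source: the vertex set of an SCC with no arcs entering it from its complement. -/
def IsSourceF (tail head : A → V) (F : Finset V) : Prop :=
  F.Nonempty ∧ (∀ u ∈ F, ∀ v ∈ F, Reaches tail head u v) ∧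
    (∀ u ∈ F, ∀ v, Reaches tail head u v → Reaches tail head v u → v ∈ F) ∧
    (∀ a, head a ∈ F → tail a ∈ F)

/-- A sink: the vertex set of an SCC with no arcs leaving it into its complement. -/
def IsSinkF (tail head : A → V) (S : Finset V) : Prop :=
  S.Nonempty ∧ (∀ u ∈ S, ∀ v ∈ S, Reaches tail head u v) ∧
    (∀ u ∈ S, ∀ v, Reaches tail head u v → Reaches tail head v u → v ∈ S) ∧
    (∀ a, tail a ∈ S → head a ∈ S)

/-- The in Laplacian `L⁺ = (d⁺)* d` in its explicit form. -/
noncomputable def Lplus [Fintype A] [DecidableEq V] (tail head : A → V)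
    (mV : V → ℝ) (mA : A → ℝ) (φ : V → ℂ) (v : V) : ℂ :=
  (mV v : ℂ)⁻¹ * ∑ a ∈ univ.filter (fun a => head a = v), (φ v - φ (tail a)) * (mA a : ℂ)

/-- The out Laplacian `L⁻ = (d⁻)* d` in its explicit form. -/
noncomputable def Lminus [Fintype A] [DecidableEq V] (tail head : A → V)
    (mV : V → ℝ) (mA : A → ℝ) (φ : V → ℂ) (v : V) : ℂ :=
  (mV v : ℂ)⁻¹ * ∑ a ∈ univ.filter (fun a => tail a = v), (φ v - φ (head a)) * (mA a : ℂ)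

/-- If `(G,m)` has a unique source `F` (resp. unique sink `S`) and `φ ∈ ker L⁺`
(resp. `φ ∈ ker L⁻`), then `φ` is constant on `F` (resp. `S`) and `max |φ|` is attained
on `F` (resp. `S`). -/
lemma convex_step (s : Finset A) (w : A → ℝ) (hw : ∀ a ∈ s, 0 < w a)
    (z : ℂ) (zi : A → ℂ)
    (hsum : ∑ a ∈ s, (z - zi a) * (w a : ℂ) = 0)
    (hle : ∀ a ∈ s, ‖zi a‖ ≤ ‖z‖) :
    ∀ a ∈ s, zi a = z := by
  have hid : ∑ a ∈ s, w a * Complex.normSq (z - zi a)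
      = (∑ a ∈ s, w a * (Complex.normSq (zi a) - Complex.normSq z))
        + 2 * ((starRingEnd ℂ) z * ∑ a ∈ s, (z - zi a) * (w a : ℂ)).re := by
    rw [Finset.mul_sum, Complex.re_sum, Finset.mul_sum, ← Finset.sum_add_distrib]
    refine Finset.sum_congr rfl fun a _ => ?_
    simp only [Complex.normSq_apply, Complex.mul_re, Complex.sub_re, Complex.sub_im,
      Complex.conj_re, Complex.conj_im, Complex.ofReal_re, Complex.ofReal_im,
      Complex.mul_im]
    ring
  rw [hsum] at hid
  simp only [mul_zero, Complex.zero_re, mul_zero, add_zero] at hid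
  have hnn : ∀ a ∈ s, 0 ≤ w a * Complex.normSq (z - zi a) := fun a ha =>
    mul_nonneg (hw a ha).le (Complex.normSq_nonneg _)
  have hnp : ∑ a ∈ s, w a * Complex.normSq (z - zi a) ≤ 0 := by
    rw [hid]
    refine Finset.sum_nonpos fun a ha => ?_
    have h1 : Complex.normSq (zi a) ≤ Complex.normSq z := by
      rw [← Complex.sq_norm, ← Complex.sq_norm]
      exact pow_le_pow_left₀ (norm_nonneg _) (hle a ha) 2
    exact mul_nonpos_of_nonneg_of_nonpos (hw a ha).le (by linarith)
  have hz : ∑ a ∈ s, w a * Complex.normSq (z - zi a) = 0 :=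
    le_antisymm hnp (Finset.sum_nonneg hnn)
  intro a ha
  have := (Finset.sum_eq_zero_iff_of_nonneg hnn).mp hz a ha
  have h2 : Complex.normSq (z - zi a) = 0 := by
    rcases mul_eq_zero.mp this with h | h
    · exact absurd h (ne_of_gt (hw a ha))
    · exact h
  have := Complex.normSq_eq_zero.mp h2
  linear_combination -this

lemma source_main [Fintype V] [Fintype A] [DecidableEq V]
    (tail head : A → V) (mV : V → ℝ) (mA : A → ℝ)
    (hmV : ∀ v, 0 < mV v) (hmA : ∀ a, 0 < mA a)
    (F : Finset V) (hF : IsSourceF tail head F)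
    (huniq : ∀ F', IsSourceF tail head F' → F' = F)
    (φ : V → ℂ) (hφ : Lplus tail head mV mA φ = 0) :
    (∀ u ∈ F, ∀ v ∈ F, φ u = φ v) ∧
    ∃ u ∈ F, ∀ v, ‖φ v‖ ≤ ‖φ u‖ := by
  classical
  have : Nonempty V := ⟨hF.1.choose⟩
  -- global maximizer
  obtain ⟨v₀, -, hv₀⟩ := Finset.exists_max_image (univ : Finset V)
    (fun v => ‖φ v‖) ⟨Classical.arbitrary V, mem_univ _⟩
  have hv₀' : ∀ v, ‖φ v‖ ≤ ‖φ v₀‖ := fun v => hv₀ v (mem_univ v)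
  -- maximum principle step
  have key : ∀ v : V, ‖φ v‖ = ‖φ v₀‖ →
      ∀ a : A, head a = v → φ (tail a) = φ v := by
    intro v hv a ha
    have h0 : Lplus tail head mV mA φ v = 0 := congrFun hφ v
    unfold Lplus at h0
    have hm : ((mV v : ℂ))⁻¹ ≠ 0 := by
      simp [Complex.ofReal_ne_zero, (hmV v).ne']
    have hs0 : ∑ a ∈ univ.filter (fun a => head a = v), (φ v - φ (tail a)) * (mA a : ℂ) = 0 := by
      rcases mul_eq_zero.mp h0 with h | h
      · exact absurd h hm
      · exact h
    exact convex_step _ mA (fun a _ => hmA a) (φ v) (fun a => φ (tail a)) hs0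
      (fun b _ => by rw [hv]; exact hv₀' _) a (by simp [ha])
  -- backward closure along paths
  have back : ∀ {wv u' : V}, Reaches tail head wv u' → φ u' = φ v₀ → φ wv = φ v₀ := by
    intro wv u' h
    induction h with
    | refl => exact id
    | tail h₁ h₂ ih =>
      intro hc
      obtain ⟨a, ha1, ha2⟩ := h₂
      have := key _ (by rw [hc]) a ha2
      rw [ha1, hc] at this
      exact ih this
  -- minimal ancestor set
  set D : Finset V := univ.filter (fun u => Reaches tail head u v₀) with hD
  have hv₀D : v₀ ∈ D := by
    simp only [hD, mem_filter]
    exact ⟨mem_univ _, Relation.ReflTransGen.refl⟩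
  obtain ⟨u, huD, humin⟩ := Finset.exists_min_image D
    (fun u => (univ.filter (fun w => Reaches tail head w u)).card) ⟨v₀, hv₀D⟩
  have huv₀ : Reaches tail head u v₀ := by simpa [hD] using huD
  set F' : Finset V := univ.filter (fun v => Reaches tail head u v ∧ Reaches tail head v u)
    with hF'
  have huF' : u ∈ F' := by
    simp only [hF', mem_filter]
    exact ⟨mem_univ _, Relation.ReflTransGen.refl, Relation.ReflTransGen.refl⟩
  have hsrc : IsSourceF tail head F' := by
    refine ⟨⟨u, huF'⟩, ?_, ?_, ?_⟩
    · intro x hx y hy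
      simp only [hF', mem_filter] at hx hy
      exact hx.2.2.trans hy.2.1
    · intro x hx v hxv hvx
      simp only [hF', mem_filter] at hx ⊢
      exact ⟨mem_univ _, hx.2.1.trans hxv, hvx.trans hx.2.2⟩
    · intro a haF
      simp only [hF', mem_filter] at haF ⊢
      have hth : Reaches tail head (tail a) (head a) :=
        Relation.ReflTransGen.single ⟨a, rfl, rfl⟩
      have htu : Reaches tail head (tail a) u := hth.trans haF.2.2
      have htD : tail a ∈ D := by simp only [hD, mem_filter]; exact ⟨mem_univ _, htu.trans huv₀⟩
      have hsub : (univ.filter (fun w => Reaches tail head w (tail a))) ⊆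
          (univ.filter (fun w => Reaches tail head w u)) := by
        intro w hw
        simp only [mem_filter] at hw ⊢
        exact ⟨mem_univ _, hw.2.trans htu⟩
      have hcard := humin _ htD
      have heq := Finset.eq_of_subset_of_card_le hsub hcard
      have hu : u ∈ univ.filter (fun w => Reaches tail head w u) := by
        simp only [mem_filter]
        exact ⟨mem_univ _, Relation.ReflTransGen.refl⟩
      rw [← heq] at hu
      have hut : Reaches tail head u (tail a) := by simpa using hu
      exact ⟨mem_univ _, hut, htu⟩
  have hFF : F' = F := huniq F' hsrc
  have hconst : ∀ w ∈ F, φ w = φ v₀ := by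
    intro w hw
    rw [← hFF] at hw
    simp only [hF', mem_filter] at hw
    exact back (hw.2.2.trans huv₀) rfl
  refine ⟨fun x hx y hy => by rw [hconst x hx, hconst y hy], ⟨u, hFF ▸ huF', ?_⟩⟩
  intro v
  rw [hconst u (hFF ▸ huF')]
  exact hv₀' v

lemma reaches_rev (f g : A → V) {x y : V} (h : Reaches f g x y) : Reaches g f y x := by
  induction h with
  | refl => exact Relation.ReflTransGen.refl
  | tail h₁ h₂ ih =>
    obtain ⟨a, ha1, ha2⟩ := h₂
    exact Relation.ReflTransGen.trans (Relation.ReflTransGen.single ⟨a, ha2, ha1⟩) ih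

lemma sink_iff_source (tail head : A → V) (S : Finset V) :
    IsSinkF tail head S ↔ IsSourceF head tail S := by
  constructor
  · rintro ⟨h1, h2, h3, h4⟩
    exact ⟨h1, fun u hu v hv => reaches_rev _ _ (h2 v hv u hu),
      fun u hu v hvu huv => h3 u hu v (reaches_rev _ _ huv) (reaches_rev _ _ hvu), h4⟩
  · rintro ⟨h1, h2, h3, h4⟩
    exact ⟨h1, fun u hu v hv => reaches_rev _ _ (h2 v hv u hu),
      fun u hu v hvu huv => h3 u hu v (reaches_rev _ _ huv) (reaches_rev _ _ hvu), h4⟩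

theorem stmt_14 [Fintype V] [Fintype A] [DecidableEq V]
    (tail head : A → V) (mV : V → ℝ) (mA : A → ℝ)
    (hmV : ∀ v, 0 < mV v) (hmA : ∀ a, 0 < mA a) :
    (∀ F : Finset V, IsSourceF tail head F → (∀ F', IsSourceF tail head F' → F' = F) →
      ∀ φ : V → ℂ, Lplus tail head mV mA φ = 0 →
        (∀ u ∈ F, ∀ v ∈ F, φ u = φ v) ∧
        ∃ u ∈ F, ∀ v, ‖φ v‖ ≤ ‖φ u‖) ∧
    (∀ S : Finset V, IsSinkF tail head S → (∀ S', IsSinkF tail head S' → S' = S) →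
      ∀ φ : V → ℂ, Lminus tail head mV mA φ = 0 →
        (∀ u ∈ S, ∀ v ∈ S, φ u = φ v) ∧
        ∃ u ∈ S, ∀ v, ‖φ v‖ ≤ ‖φ u‖) := by
  constructor
  · intro F hF huniq φ hφ
    exact source_main tail head mV mA hmV hmA F hF huniq φ hφ
  · intro S hS huniq φ hφ
    exact source_main head tail mV mA hmV hmA S ((sink_iff_source tail head S).mp hS)
      (fun S' h' => huniq S' ((sink_iff_source tail head S').mpr h')) φ hφ
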